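/- (Proposition: diagonal coordinates of the conjugate of s are traces against the spectral projections.) Let r be an upper triangular n×n complex matrix with pairwise distinct diagonal entries, and let b be an invertible upper triangular n×n complex matrix with b r b^{−1} = diag(r). Then for every lower triangular n×n complex matrix s and every 1 ≤ ι ≤ n, (b s b^{−1})_{ιι} = tr(L^ι(r) · s). -/
import Mathlib


/-- `M` is an upper triangular complex matrix. -/
def IsUT {n : ℕ} (M : Matrix (Fin n) (Fin n) ℂ) : Prop :=
  ∀ i j : Fin n, j < i → M i j = 0

/-- `M` is a lower triangular complex matrix (the chosen representatives of
`𝔟*ₙ = 𝔤𝔩ₙ/𝔫⁺`). -/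
def IsLT {n : ℕ} (M : Matrix (Fin n) (Fin n) ℂ) : Prop :=
  ∀ i j : Fin n, i < j → M i j = 0

/-- The spectral projection
`L^ι(r) = (∏_{k ≠ ι} (r_{ιι} − r_{kk}))⁻¹ • ∏_{k ≠ ι} (r − r_{kk}·I)`. -/
noncomputable def Lop {n : ℕ} (r : Matrix (Fin n) (Fin n) ℂ) (ι : Fin n) :
    Matrix (Fin n) (Fin n) ℂ :=
  (∏ k ∈ Finset.univ.erase ι, (r ι ι - r k k))⁻¹ •
    (Polynomial.aeval r)
      (∏ k ∈ Finset.univ.erase ι, (Polynomial.X - Polynomial.C (r k k)))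

open Polynomial Matrix in
/-- Polynomial evaluation at a diagonal matrix is entrywise evaluation. -/
theorem aux_aeval_diag {n : ℕ} (d : Fin n → ℂ) (q : ℂ[X]) :
    (Polynomial.aeval (Matrix.diagonal d)) q = Matrix.diagonal (fun i => q.eval (d i)) := by
  induction q using Polynomial.induction_on with
  | C a => simp [Algebra.algebraMap_eq_smul_one, Matrix.smul_eq_diagonal_mul]
  | add p q hp hq => simp [hp, hq, Matrix.diagonal_add]
  | monomial a m h =>
    rw [pow_succ, ← mul_assoc, _root_.map_mul, h, aeval_X, diagonal_mul_diagonal]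
    simp

open Polynomial Matrix in
/-- Conjugation commutes with polynomial evaluation. -/
theorem aux_conj_aeval {n : ℕ} (b r : Matrix (Fin n) (Fin n) ℂ)
    (h1 : b * b⁻¹ = 1) (h2 : b⁻¹ * b = 1) (q : ℂ[X]) :
    b * (Polynomial.aeval r) q * b⁻¹ = (Polynomial.aeval (b * r * b⁻¹)) q := by
  induction q using Polynomial.induction_on with
  | C a =>
    simp [Algebra.algebraMap_eq_smul_one, Matrix.mul_smul, Matrix.smul_mul, h1]
  | add p q hp hq => simp [Matrix.mul_add, Matrix.add_mul, hp, hq]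
  | monomial a m h =>
    rw [pow_succ, ← mul_assoc, _root_.map_mul (aeval r) (C m * X ^ a) X,
      _root_.map_mul (aeval (b * r * b⁻¹)) (C m * X ^ a) X, aeval_X, aeval_X, ← h]
    have : b * ((aeval r) (C m * X ^ a) * r) * b⁻¹ =
        (b * (aeval r) (C m * X ^ a) * b⁻¹) * (b * r * b⁻¹) := by
      simp only [Matrix.mul_assoc]
      rw [← Matrix.mul_assoc b⁻¹ b, h2]
      simp [Matrix.mul_assoc]
    rw [this]

/-- Diagonal coordinates of the conjugate of `s` are traces against the spectral
projections: if `b` is an invertible upper triangular matrix diagonalizing the regular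
semisimple upper triangular matrix `r` (`b r b⁻¹ = diag(r)`), then for every lower
triangular `s` and every `ι`, `(b s b⁻¹)_{ιι} = tr(L^ι(r) · s)`. -/
theorem conj_diag_coordinates_are_traces
    (n : ℕ) (hn : 1 ≤ n)
    (r : Matrix (Fin n) (Fin n) ℂ) (hr : IsUT r)
    (hdist : ∀ i j : Fin n, i ≠ j → r i i ≠ r j j)
    (b : Matrix (Fin n) (Fin n) ℂ) (hb : IsUT b) (hbu : IsUnit b.det)
    (hdiag : b * r * b⁻¹ = Matrix.diagonal fun i => r i i)
    (s : Matrix (Fin n) (Fin n) ℂ) (hs : IsLT s) :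
    ∀ ι : Fin n, (b * s * b⁻¹) ι ι = Matrix.trace (Lop r ι * s) := by
  open Polynomial Matrix in
  intro ι
  rw [Lop]
  have h1 : b * b⁻¹ = 1 := Matrix.mul_nonsing_inv b hbu
  have h2 : b⁻¹ * b = 1 := Matrix.nonsing_inv_mul b hbu
  set q : ℂ[X] := ∏ k ∈ Finset.univ.erase ι, (Polynomial.X - Polynomial.C (r k k)) with hq
  set c : ℂ := ∏ k ∈ Finset.univ.erase ι, (r ι ι - r k k) with hc
  have hcne : c ≠ 0 := by
    rw [hc]
    apply Finset.prod_ne_zero_iff.2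
    intro k hk
    exact sub_ne_zero.2 (hdist ι k (fun h => (Finset.mem_erase.1 hk).1 h.symm))
  have heval : ∀ i : Fin n, q.eval (r i i) = if i = ι then c else 0 := by
    intro i
    rw [hq]
    by_cases h : i = ι
    · subst h; simp [hc, Polynomial.eval_prod]
    · rw [if_neg h]
      rw [Polynomial.eval_prod]
      exact Finset.prod_eq_zero (Finset.mem_erase.2 ⟨h, Finset.mem_univ i⟩) (by simp)
  have hconj : b * (Polynomial.aeval r) q * b⁻¹ =
      Matrix.diagonal (fun i => if i = ι then c else 0) := by
    rw [aux_conj_aeval b r h1 h2, hdiag, aux_aeval_diag]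
    simp only [heval]
  have key : ∀ M : Matrix (Fin n) (Fin n) ℂ, b⁻¹ * (b * M * b⁻¹) * b = M := by
    intro M
    simp only [Matrix.mul_assoc, h2, Matrix.mul_one]
    rw [← Matrix.mul_assoc, h2, Matrix.one_mul]
  have haev : (Polynomial.aeval r) q =
      b⁻¹ * Matrix.diagonal (fun i => if i = ι then c else 0) * b := by
    rw [← hconj, key]
  set D : Matrix (Fin n) (Fin n) ℂ := Matrix.diagonal (fun i => if i = ι then c else 0) with hD
  have hdtr : Matrix.trace (D * (b * s * b⁻¹)) = c * (b * s * b⁻¹) ι ι := by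
    rw [Matrix.trace]
    rw [Finset.sum_eq_single ι]
    · simp [hD, Matrix.diagonal_mul, Matrix.diag]
    · intro k _ hk
      simp [hD, Matrix.diagonal_mul, Matrix.diag, hk]
    · simp
  have htr : Matrix.trace ((b⁻¹ * D * b) * s) = c * (b * s * b⁻¹) ι ι :=
    calc Matrix.trace ((b⁻¹ * D * b) * s)
        = Matrix.trace ((b⁻¹ * D) * (b * s)) := by rw [Matrix.mul_assoc]
      _ = Matrix.trace ((b * s) * (b⁻¹ * D)) := Matrix.trace_mul_comm _ _
      _ = Matrix.trace ((b * s * b⁻¹) * D) := by simp only [Matrix.mul_assoc]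
      _ = Matrix.trace (D * (b * s * b⁻¹)) := Matrix.trace_mul_comm _ _
      _ = c * (b * s * b⁻¹) ι ι := hdtr
  rw [haev, Matrix.smul_mul, Matrix.trace_smul, htr, smul_eq_mul,
    inv_mul_cancel_left₀ hcne]
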